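/- Let p > 1 and d ≥ 1. There exist positive constants C = C(p) and C' = C'(p) such that for all ξ, η ∈ ℝ^d and all ε ≥ 0: C (|ξ|² + |η|² + ε²)^{(p-2)/2} |ξ − η|² ≤ |b_ε(|ξ|)^{(p-2)/2} ξ − b_ε(|η|)^{(p-2)/2} η|² ≤ C' (b_ε(|ξ|)^{p-2} ξ − b_ε(|η|)^{p-2} η) · (ξ − η), where b_ε(t) = √(t² + ε²). -/

import Mathlib

open Real Set

lemma hasDerivAt_phi (m ε : ℝ) (r : ℝ) (h : 0 < r^2 + ε^2) :
    HasDerivAt (fun r : ℝ => r * (r^2+ε^2)^m)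
      ((r^2+ε^2)^(m-1) * ((1+2*m)*r^2 + ε^2)) r := by
  have h1 : HasDerivAt (fun r : ℝ => r^2+ε^2) (2*r) r := by
    simpa using (hasDerivAt_pow 2 r).add_const (ε^2)
  have h2 : HasDerivAt (fun r : ℝ => (r^2+ε^2)^m) (2*r * m * (r^2+ε^2)^(m-1)) r :=
    h1.rpow_const (Or.inl h.ne')
  have h3 := (hasDerivAt_id r).mul h2
  simp only [id_eq] at h3
  refine h3.congr_deriv ?_
  have : (r^2+ε^2)^m = (r^2+ε^2)^(m-1) * (r^2+ε^2) := by
    rw [← Real.rpow_add_one h.ne']; ring_nf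
  rw [this]; ring

lemma slope_phi (m ε x y : ℝ) (hy : 0 ≤ y) (hyx : y < x) (hB : 0 < y^2+ε^2) :
    ∃ c, y < c ∧ c < x ∧
      x*(x^2+ε^2)^m - y*(y^2+ε^2)^m
        = (c^2+ε^2)^(m-1) * ((1+2*m)*c^2+ε^2) * (x - y) := by
  have hpos : ∀ r ∈ Icc y x, 0 < r^2 + ε^2 := by
    intro r hr
    have : y^2 ≤ r^2 := by nlinarith [hr.1]
    nlinarith
  have hderiv : ∀ r ∈ Ioo y x,
      HasDerivAt (fun r : ℝ => r * (r^2+ε^2)^m)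
        ((r^2+ε^2)^(m-1) * ((1+2*m)*r^2 + ε^2)) r := by
    intro r hr
    exact hasDerivAt_phi m ε r (hpos r ⟨hr.1.le, hr.2.le⟩)
  have hcont : ContinuousOn (fun r : ℝ => r * (r^2+ε^2)^m) (Icc y x) := by
    intro r hr
    exact (hasDerivAt_phi m ε r (hpos r hr)).continuousAt.continuousWithinAt
  obtain ⟨c, hc, heq⟩ := exists_hasDerivAt_eq_slope _ _ hyx hcont hderiv
  refine ⟨c, hc.1, hc.2, ?_⟩
  rw [heq, div_mul_cancel₀ _ (sub_ne_zero.2 hyx.ne')]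

lemma rpow_sq' (A : ℝ) (hA : 0 ≤ A) (q : ℝ) : (A^q)^(2:ℕ) = A^(2*q) := by
  rw [← Real.rpow_natCast (A^q) 2, ← Real.rpow_mul hA]
  congr 1; push_cast; ring

lemma sqrt_rpow_bridge (A : ℝ) (hA : 0 ≤ A) (e : ℝ) : (Real.sqrt A)^e = A^(e/2) := by
  rw [Real.sqrt_eq_rpow, ← Real.rpow_mul hA]
  congr 1; ring

set_option maxHeartbeats 1000000 in
lemma scalar_key_ge (p : ℝ) (hp : 1 < p) (hp2 : 2 ≤ p) :
    ∃ C C' : ℝ, 0 < C ∧ 1 ≤ C' ∧ ∀ x y ε : ℝ, 0 ≤ y → y ≤ x → 0 ≤ ε →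
      C * (x^2+y^2+ε^2)^((p-2)/2) * (x-y)^2
          ≤ ((x^2+ε^2)^((p-2)/4)*x - (y^2+ε^2)^((p-2)/4)*y)^2 ∧
      C * (x^2+y^2+ε^2)^((p-2)/2) * (x+y)^2
          ≤ ((x^2+ε^2)^((p-2)/4)*x + (y^2+ε^2)^((p-2)/4)*y)^2 ∧
      ((x^2+ε^2)^((p-2)/4)*x - (y^2+ε^2)^((p-2)/4)*y)^2
          ≤ C' * ((x-y) * ((x^2+ε^2)^((p-2)/2)*x - (y^2+ε^2)^((p-2)/2)*y)) := by
  refine ⟨(4 * (2:ℝ)^((p-2)/2))⁻¹, (p/2)^2, by positivity, by nlinarith, ?_⟩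
  intro x y ε hy hyx hε
  have hx : 0 ≤ x := hy.trans hyx
  have hq : 0 ≤ (p-2)/4 := by linarith
  have he : 0 ≤ (p-2)/2 := by linarith
  have hA0 : (0:ℝ) ≤ x^2+ε^2 := by positivity
  have hB0 : (0:ℝ) ≤ y^2+ε^2 := by positivity
  have hK0 : (0:ℝ) ≤ x^2+y^2+ε^2 := by positivity
  have hBA : y^2+ε^2 ≤ x^2+ε^2 := by nlinarith
  have hAK : x^2+ε^2 ≤ x^2+y^2+ε^2 := by nlinarith
  have hKA2 : x^2+y^2+ε^2 ≤ 2*(x^2+ε^2) := by nlinarith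
  set s := (x^2+ε^2)^((p-2)/4) with hs_def
  set t := (y^2+ε^2)^((p-2)/4) with ht_def
  have hs0 : 0 ≤ s := Real.rpow_nonneg hA0 _
  have ht0 : 0 ≤ t := Real.rpow_nonneg hB0 _
  have hts : t ≤ s := Real.rpow_le_rpow hB0 hBA hq
  have hs2 : s^2 = (x^2+ε^2)^((p-2)/2) := by
    rw [hs_def, rpow_sq' _ hA0]; congr 1; ring
  have hKe2 : (x^2+y^2+ε^2)^((p-2)/2) ≤ 2^((p-2)/2) * (x^2+ε^2)^((p-2)/2) := by
    calc (x^2+y^2+ε^2)^((p-2)/2) ≤ (2*(x^2+ε^2))^((p-2)/2) :=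
          Real.rpow_le_rpow hK0 hKA2 he
      _ = 2^((p-2)/2) * (x^2+ε^2)^((p-2)/2) := Real.mul_rpow (by norm_num) hA0
  have hCpos : (0:ℝ) < (4 * (2:ℝ)^((p-2)/2))⁻¹ := by positivity
  have hAe0 : 0 ≤ (x^2+ε^2)^((p-2)/2) := Real.rpow_nonneg hA0 _
  have d1 : (4 * (2:ℝ)^((p-2)/2))⁻¹ * (x^2+y^2+ε^2)^((p-2)/2)
      ≤ 1/4 * (x^2+ε^2)^((p-2)/2) := by
    calc (4 * (2:ℝ)^((p-2)/2))⁻¹ * (x^2+y^2+ε^2)^((p-2)/2)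
        ≤ (4 * (2:ℝ)^((p-2)/2))⁻¹ * (2^((p-2)/2) * (x^2+ε^2)^((p-2)/2)) :=
          mul_le_mul_of_nonneg_left hKe2 hCpos.le
      _ = 1/4 * (x^2+ε^2)^((p-2)/2) := by
          rw [← mul_assoc]
          congr 1
          rw [inv_mul_eq_div, div_eq_iff (by positivity)]
          ring
  have hty : t*y ≤ s*y := mul_le_mul_of_nonneg_right hts hy
  have hlow : s*(x-y) ≤ s*x - t*y := by linarith
  have hlow0 : 0 ≤ s*(x-y) := mul_nonneg hs0 (by linarith)
  refine ⟨?_, ?_, ?_⟩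
  · -- S1
    have e1 : (s*(x-y))^2 ≤ (s*x-t*y)^2 := pow_le_pow_left₀ hlow0 hlow 2
    have e2 : (s*(x-y))^2 = (x^2+ε^2)^((p-2)/2) * (x-y)^2 := by
      rw [mul_pow, hs2]
    have d2 := mul_le_mul_of_nonneg_right d1 (sq_nonneg (x-y))
    have d3 : 0 ≤ (x^2+ε^2)^((p-2)/2) * (x-y)^2 := mul_nonneg hAe0 (sq_nonneg _)
    linarith
  · -- S2
    have e1 : (s*x)^2 ≤ (s*x+t*y)^2 := by
      apply pow_le_pow_left₀ (mul_nonneg hs0 hx)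
      linarith [mul_nonneg ht0 hy]
    have e2 : (s*x)^2 = (x^2+ε^2)^((p-2)/2) * x^2 := by rw [mul_pow, hs2]
    have d2 := mul_le_mul_of_nonneg_right d1 (sq_nonneg (x+y))
    have e4 : (x+y)^2 ≤ 4*x^2 := by nlinarith
    have e5 := mul_le_mul_of_nonneg_left e4 hAe0
    linarith
  · -- S3
    rcases eq_or_lt_of_le hyx with heq | hlt
    · rw [ht_def, hs_def, heq]
      simp
    · -- y < x
      have hub : s*x - t*y ≤ (p/2) * s * (x-y) := by
        rcases eq_or_lt_of_le hB0 with hB | hBpos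
        · -- y = 0, ε = 0
          have hy0 : y = 0 := by nlinarith
          have hsx : 0 ≤ s*x := mul_nonneg hs0 hx
          rw [hy0]
          nlinarith
        · obtain ⟨c, hc1, hc2, hceq⟩ := slope_phi ((p-2)/4) ε x y hy hlt hBpos
          rw [← hs_def, ← ht_def] at hceq
          have hc0 : 0 ≤ c := le_trans hy hc1.le
          have hcpos : 0 < c^2+ε^2 := by nlinarith
          have hcA : c^2+ε^2 ≤ x^2+ε^2 := by nlinarith
          have hr0 : 0 ≤ (c^2+ε^2)^((p-2)/4-1) := Real.rpow_nonneg hcpos.le _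
          have hb1 : (1+2*((p-2)/4))*c^2+ε^2 ≤ (p/2)*(c^2+ε^2) := by nlinarith
          have hD1 := mul_le_mul_of_nonneg_left hb1 hr0
          have hD2 : (c^2+ε^2)^((p-2)/4-1) * (c^2+ε^2) = (c^2+ε^2)^((p-2)/4) := by
            rw [← Real.rpow_add_one hcpos.ne']; congr 1; ring
          have hD3 : (c^2+ε^2)^((p-2)/4) ≤ s := by
            rw [hs_def]; exact Real.rpow_le_rpow hcpos.le hcA hq
          have w1 := mul_le_mul_of_nonneg_right hD1 (by linarith : (0:ℝ) ≤ x - y)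
          have w2 : (c^2+ε^2)^((p-2)/4-1) * ((p/2)*(c^2+ε^2)) * (x-y)
              = (p/2)*(c^2+ε^2)^((p-2)/4)*(x-y) := by rw [← hD2]; ring
          have w3 : (p/2)*(c^2+ε^2)^((p-2)/4)*(x-y) ≤ (p/2)*s*(x-y) := by
            apply mul_le_mul_of_nonneg_right _ (by linarith : (0:ℝ) ≤ x - y)
            apply mul_le_mul_of_nonneg_left hD3 (by linarith : (0:ℝ) ≤ p/2)
          linarith [hceq, w1, w2, w3]
      have hub0 : 0 ≤ s*x - t*y := le_trans hlow0 hlow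
      have e1 : (s*x-t*y)^2 ≤ ((p/2)*s*(x-y))^2 := pow_le_pow_left₀ hub0 hub 2
      have e2 : ((p/2)*s*(x-y))^2 = (p/2)^2 * ((x^2+ε^2)^((p-2)/2) * (x-y)^2) := by
        rw [mul_pow, mul_pow, hs2]; ring
      have hBe : (y^2+ε^2)^((p-2)/2) ≤ (x^2+ε^2)^((p-2)/2) :=
        Real.rpow_le_rpow hB0 hBA he
      have f0 := mul_le_mul_of_nonneg_right hBe hy
      have f1 : (x^2+ε^2)^((p-2)/2)*(x-y)
          ≤ (x^2+ε^2)^((p-2)/2)*x - (y^2+ε^2)^((p-2)/2)*y := by linarith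
      have f2 := mul_le_mul_of_nonneg_left f1 (by linarith : (0:ℝ) ≤ x - y)
      have g := mul_le_mul_of_nonneg_left f2 (by positivity : (0:ℝ) ≤ (p/2)^2)
      linarith [e1, e2, g]

set_option maxHeartbeats 2000000 in
lemma scalar_key_lt (p : ℝ) (hp : 1 < p) (hp2 : p < 2) :
    ∃ C C' : ℝ, 0 < C ∧ 1 ≤ C' ∧ ∀ x y ε : ℝ, 0 ≤ y → y ≤ x → 0 ≤ ε →
      C * (x^2+y^2+ε^2)^((p-2)/2) * (x-y)^2
          ≤ ((x^2+ε^2)^((p-2)/4)*x - (y^2+ε^2)^((p-2)/4)*y)^2 ∧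
      C * (x^2+y^2+ε^2)^((p-2)/2) * (x+y)^2
          ≤ ((x^2+ε^2)^((p-2)/4)*x + (y^2+ε^2)^((p-2)/4)*y)^2 ∧
      ((x^2+ε^2)^((p-2)/4)*x - (y^2+ε^2)^((p-2)/4)*y)^2
          ≤ C' * ((x-y) * ((x^2+ε^2)^((p-2)/2)*x - (y^2+ε^2)^((p-2)/2)*y)) := by
  have hp1 : (0:ℝ) < p - 1 := by linarith
  refine ⟨(p/2)^2, 1/(p-1), by positivity, ?_, ?_⟩
  · rw [le_div_iff₀ hp1]; linarith
  intro x y ε hy hyx hε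
  have hx : 0 ≤ x := hy.trans hyx
  have hq : (p-2)/4 < 0 := by linarith
  have he : (p-2)/2 < 0 := by linarith
  have hA0 : (0:ℝ) ≤ x^2+ε^2 := by positivity
  have hB0 : (0:ℝ) ≤ y^2+ε^2 := by positivity
  have hK0 : (0:ℝ) ≤ x^2+y^2+ε^2 := by positivity
  have hBA : y^2+ε^2 ≤ x^2+ε^2 := by nlinarith
  have hAK : x^2+ε^2 ≤ x^2+y^2+ε^2 := by nlinarith
  have hBK : y^2+ε^2 ≤ x^2+y^2+ε^2 := by nlinarith
  have hpsq : (p/2)^2 ≤ 1 := by nlinarith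
  rcases eq_or_lt_of_le hB0 with hB | hBpos
  · -- y = 0 and ε = 0
    have hy0 : y = 0 := by nlinarith
    have hε0 : ε = 0 := by nlinarith
    subst hy0; subst hε0
    have hne : (p-2)/4 ≠ 0 := by
      intro h; rw [div_eq_zero_iff] at h
      rcases h with h|h
      · linarith
      · norm_num at h
    have hne2 : (p-2)/2 ≠ 0 := by
      intro h; rw [div_eq_zero_iff] at h
      rcases h with h|h
      · linarith
      · norm_num at h
    have hz : ((0:ℝ)^2+(0:ℝ)^2)^((p-2)/4) = 0 := by
      norm_num
      exact Real.zero_rpow hne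
    have hz2 : ((0:ℝ)^2+(0:ℝ)^2)^((p-2)/2) = 0 := by
      norm_num
      exact Real.zero_rpow hne2
    have hKx : x^2+(0:ℝ)^2+(0:ℝ)^2 = x^2+(0:ℝ)^2 := by norm_num
    have hsx2 : ((x^2+(0:ℝ)^2)^((p-2)/4)*x)^2 = (x^2+(0:ℝ)^2)^((p-2)/2) * x^2 := by
      rw [mul_pow, rpow_sq' _ (by positivity)]
      congr 1
      congr 1
      ring
    have hM0 : 0 ≤ (x^2+(0:ℝ)^2)^((p-2)/2) * x^2 :=
      mul_nonneg (Real.rpow_nonneg (by positivity) _) (sq_nonneg x)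
    refine ⟨?_, ?_, ?_⟩
    · rw [hz]
      simp only [mul_zero, sub_zero]
      rw [hsx2, hKx]
      linarith [mul_le_mul_of_nonneg_right hpsq hM0]
    · rw [hz]
      simp only [mul_zero, add_zero]
      rw [hsx2, hKx]
      linarith [mul_le_mul_of_nonneg_right hpsq hM0]
    · rw [hz, hz2]
      simp only [mul_zero, sub_zero]
      rw [hsx2]
      have h1 : (1:ℝ) ≤ 1/(p-1) := by rw [le_div_iff₀ hp1]; linarith
      have hr : x*((x^2+(0:ℝ)^2)^((p-2)/2)*x) = (x^2+(0:ℝ)^2)^((p-2)/2)*x^2 := by ring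
      rw [hr]
      linarith [mul_le_mul_of_nonneg_right h1 hM0]
  · have hApos : 0 < x^2+ε^2 := lt_of_lt_of_le hBpos hBA
    have hKpos : 0 < x^2+y^2+ε^2 := lt_of_lt_of_le hBpos hBK
    set s := (x^2+ε^2)^((p-2)/4) with hs_def
    set t := (y^2+ε^2)^((p-2)/4) with ht_def
    have hs0 : 0 ≤ s := Real.rpow_nonneg hA0 _
    have ht0 : 0 ≤ t := Real.rpow_nonneg hB0 _
    have hst : s ≤ t := Real.rpow_le_rpow_of_nonpos hBpos hBA hq.le
    have hKA : (x^2+y^2+ε^2)^((p-2)/4) ≤ s :=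
      Real.rpow_le_rpow_of_nonpos hApos hAK hq.le
    have hKB : (x^2+y^2+ε^2)^((p-2)/4) ≤ t :=
      Real.rpow_le_rpow_of_nonpos hBpos hBK hq.le
    have hKq0 : 0 ≤ (x^2+y^2+ε^2)^((p-2)/4) := Real.rpow_nonneg hK0 _
    have hk2 : ((x^2+y^2+ε^2)^((p-2)/4))^2 = (x^2+y^2+ε^2)^((p-2)/2) := by
      rw [rpow_sq' _ hK0]; congr 1; ring
    have hs2 : s^2 = (x^2+ε^2)^((p-2)/2) := by
      rw [hs_def, rpow_sq' _ hA0]; congr 1; ring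
    have hKe0 : 0 ≤ (x^2+y^2+ε^2)^((p-2)/2) := Real.rpow_nonneg hK0 _
    refine ⟨?_, ?_, ?_⟩
    · -- S1
      rcases eq_or_lt_of_le hyx with heq | hlt
      · rw [heq]
        have : x - x = 0 := by ring
        rw [this]
        simp [sq_nonneg]
      · obtain ⟨c, hc1, hc2, hceq⟩ := slope_phi ((p-2)/4) ε x y hy hlt hBpos
        rw [← hs_def, ← ht_def] at hceq
        have hc0 : 0 ≤ c := le_trans hy hc1.le
        have hcpos : 0 < c^2+ε^2 := by
          have h2 := pow_le_pow_left₀ hy hc1.le 2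
          linarith only [hBpos, h2]
        have hcA : c^2+ε^2 ≤ x^2+ε^2 := by
          have h2 := pow_le_pow_left₀ hc0 hc2.le 2
          linarith only [h2]
        have hr0 : 0 ≤ (c^2+ε^2)^((p-2)/4-1) := Real.rpow_nonneg hcpos.le _
        have hb1 : (p/2)*(c^2+ε^2) ≤ (1+2*((p-2)/4))*c^2+ε^2 := by
          have h2 := mul_nonneg (by linarith only [hp2] : (0:ℝ) ≤ 2-p) (sq_nonneg ε)
          linarith only [h2]
        have hD1 := mul_le_mul_of_nonneg_left hb1 hr0
        have hD2 : (c^2+ε^2)^((p-2)/4-1) * (c^2+ε^2) = (c^2+ε^2)^((p-2)/4) := by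
          rw [← Real.rpow_add_one hcpos.ne']; congr 1; ring
        have hD3 : s ≤ (c^2+ε^2)^((p-2)/4) := by
          rw [hs_def]; exact Real.rpow_le_rpow_of_nonpos hcpos hcA hq.le
        have hD4 : (x^2+y^2+ε^2)^((p-2)/4) ≤ (c^2+ε^2)^((p-2)/4) := le_trans hKA hD3
        have w1 := mul_le_mul_of_nonneg_right hD1 (by linarith : (0:ℝ) ≤ x - y)
        have w2 : (c^2+ε^2)^((p-2)/4-1) * ((p/2)*(c^2+ε^2)) * (x-y)
            = (p/2)*(c^2+ε^2)^((p-2)/4)*(x-y) := by rw [← hD2]; ring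
        have w3 : (p/2)*(x^2+y^2+ε^2)^((p-2)/4)*(x-y)
            ≤ (p/2)*(c^2+ε^2)^((p-2)/4)*(x-y) := by
          apply mul_le_mul_of_nonneg_right _ (by linarith : (0:ℝ) ≤ x - y)
          apply mul_le_mul_of_nonneg_left hD4 (by linarith : (0:ℝ) ≤ p/2)
        have hlow : (p/2)*(x^2+y^2+ε^2)^((p-2)/4)*(x-y) ≤ s*x - t*y := by
          linarith [hceq, w1, w2, w3]
        have hlow0 : 0 ≤ (p/2)*(x^2+y^2+ε^2)^((p-2)/4)*(x-y) := by
          apply mul_nonneg (mul_nonneg (by linarith) hKq0) (by linarith)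
        have e1 : ((p/2)*(x^2+y^2+ε^2)^((p-2)/4)*(x-y))^2 ≤ (s*x-t*y)^2 :=
          pow_le_pow_left₀ hlow0 hlow 2
        have e2 : ((p/2)*(x^2+y^2+ε^2)^((p-2)/4)*(x-y))^2
            = (p/2)^2 * ((x^2+y^2+ε^2)^((p-2)/2) * (x-y)^2) := by
          rw [mul_pow, mul_pow, hk2]; ring
        linarith only [e1, e2]
    · -- S2
      have l1 := mul_le_mul_of_nonneg_right hKA hx
      have l2 := mul_le_mul_of_nonneg_right hKB hy
      have low2 : (x^2+y^2+ε^2)^((p-2)/4)*(x+y) ≤ s*x + t*y := by linarith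
      have low20 : 0 ≤ (x^2+y^2+ε^2)^((p-2)/4)*(x+y) :=
        mul_nonneg hKq0 (by linarith)
      have e1 : ((x^2+y^2+ε^2)^((p-2)/4)*(x+y))^2 ≤ (s*x+t*y)^2 :=
        pow_le_pow_left₀ low20 low2 2
      have e2 : ((x^2+y^2+ε^2)^((p-2)/4)*(x+y))^2
          = (x^2+y^2+ε^2)^((p-2)/2) * (x+y)^2 := by rw [mul_pow, hk2]
      have hm : 0 ≤ (x^2+y^2+ε^2)^((p-2)/2) * (x+y)^2 :=
        mul_nonneg hKe0 (sq_nonneg _)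
      linarith only [e1, e2, mul_le_mul_of_nonneg_right hpsq hm]
    · -- S3
      rcases eq_or_lt_of_le hyx with heq | hlt
      · have hts' : t = s := by rw [ht_def, hs_def, heq]
        rw [hts', heq]
        simp
      · obtain ⟨c, hc1, hc2, hceq⟩ := slope_phi ((p-2)/4) ε x y hy hlt hBpos
        rw [← hs_def, ← ht_def] at hceq
        have hc0 : 0 ≤ c := le_trans hy hc1.le
        have hcpos : 0 < c^2+ε^2 := by
          have h2 := pow_le_pow_left₀ hy hc1.le 2
          linarith only [hBpos, h2]
        have hr0 : 0 ≤ (c^2+ε^2)^((p-2)/4-1) := Real.rpow_nonneg hcpos.le _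
        have hb1 : 0 ≤ (1+2*((p-2)/4))*c^2+ε^2 := by
          have h2 := mul_nonneg (by linarith only [hp] : (0:ℝ) ≤ p) (sq_nonneg c)
          linarith only [h2, sq_nonneg ε]
        have hub0 : 0 ≤ s*x - t*y := by
          have h2 : x*s - y*t = s*x - t*y := by ring
          rw [← h2, hceq]
          exact mul_nonneg (mul_nonneg hr0 hb1) (by linarith : (0:ℝ) ≤ x - y)
        have hty : s*y ≤ t*y := mul_le_mul_of_nonneg_right hst hy
        have hub : s*x - t*y ≤ s*(x-y) := by linarith
        have e1 : (s*x-t*y)^2 ≤ (s*(x-y))^2 := pow_le_pow_left₀ hub0 hub 2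
        have e2 : (s*(x-y))^2 = (x^2+ε^2)^((p-2)/2) * (x-y)^2 := by
          rw [mul_pow, hs2]
        obtain ⟨c', hc1', hc2', hceq'⟩ := slope_phi ((p-2)/2) ε x y hy hlt hBpos
        have hc0' : 0 ≤ c' := le_trans hy hc1'.le
        have hcpos' : 0 < c'^2+ε^2 := by
          have h2 := pow_le_pow_left₀ hy hc1'.le 2
          linarith only [hBpos, h2]
        have hcA' : c'^2+ε^2 ≤ x^2+ε^2 := by
          have h2 := pow_le_pow_left₀ hc0' hc2'.le 2
          linarith only [h2]
        have hr0' : 0 ≤ (c'^2+ε^2)^((p-2)/2-1) := Real.rpow_nonneg hcpos'.le _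
        have hb1' : (p-1)*(c'^2+ε^2) ≤ (1+2*((p-2)/2))*c'^2+ε^2 := by
          have h2 := mul_nonneg (by linarith only [hp2] : (0:ℝ) ≤ 2-p) (sq_nonneg ε)
          linarith only [h2]
        have hD1' := mul_le_mul_of_nonneg_left hb1' hr0'
        have hD2' : (c'^2+ε^2)^((p-2)/2-1) * (c'^2+ε^2) = (c'^2+ε^2)^((p-2)/2) := by
          rw [← Real.rpow_add_one hcpos'.ne']; congr 1; ring
        have hD3' : (x^2+ε^2)^((p-2)/2) ≤ (c'^2+ε^2)^((p-2)/2) :=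
          Real.rpow_le_rpow_of_nonpos hcpos' hcA' he.le
        have w1' := mul_le_mul_of_nonneg_right hD1' (by linarith : (0:ℝ) ≤ x - y)
        have w2' : (c'^2+ε^2)^((p-2)/2-1) * ((p-1)*(c'^2+ε^2)) * (x-y)
            = (p-1)*(c'^2+ε^2)^((p-2)/2)*(x-y) := by rw [← hD2']; ring
        have w3' : (p-1)*(x^2+ε^2)^((p-2)/2)*(x-y)
            ≤ (p-1)*(c'^2+ε^2)^((p-2)/2)*(x-y) := by
          apply mul_le_mul_of_nonneg_right _ (by linarith : (0:ℝ) ≤ x - y)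
          apply mul_le_mul_of_nonneg_left hD3' (by linarith : (0:ℝ) ≤ p-1)
        have g1 : (p-1)*(x^2+ε^2)^((p-2)/2)*(x-y)
            ≤ (x^2+ε^2)^((p-2)/2)*x - (y^2+ε^2)^((p-2)/2)*y := by
          linarith only [hceq', w1', w2', w3']
        have g2 := mul_le_mul_of_nonneg_left g1 (by linarith : (0:ℝ) ≤ x - y)
        rw [div_mul_eq_mul_div, le_div_iff₀ hp1, one_mul]
        linarith only [g2, mul_le_mul_of_nonneg_left e1 hp1.le,
          mul_le_mul_of_nonneg_left e2.le hp1.le, mul_le_mul_of_nonneg_left e2.ge hp1.le]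

set_option maxHeartbeats 1000000 in
lemma scalar_key (p : ℝ) (hp : 1 < p) :
    ∃ C C' : ℝ, 0 < C ∧ 1 ≤ C' ∧ ∀ x y ε : ℝ, 0 ≤ x → 0 ≤ y → 0 ≤ ε →
      C * (x^2+y^2+ε^2)^((p-2)/2) * (x-y)^2
          ≤ ((x^2+ε^2)^((p-2)/4)*x - (y^2+ε^2)^((p-2)/4)*y)^2 ∧
      C * (x^2+y^2+ε^2)^((p-2)/2) * (x+y)^2
          ≤ ((x^2+ε^2)^((p-2)/4)*x + (y^2+ε^2)^((p-2)/4)*y)^2 ∧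
      ((x^2+ε^2)^((p-2)/4)*x - (y^2+ε^2)^((p-2)/4)*y)^2
          ≤ C' * ((x-y) * ((x^2+ε^2)^((p-2)/2)*x - (y^2+ε^2)^((p-2)/2)*y)) := by
  have key : ∃ C C' : ℝ, 0 < C ∧ 1 ≤ C' ∧ ∀ x y ε : ℝ, 0 ≤ y → y ≤ x → 0 ≤ ε →
      C * (x^2+y^2+ε^2)^((p-2)/2) * (x-y)^2
          ≤ ((x^2+ε^2)^((p-2)/4)*x - (y^2+ε^2)^((p-2)/4)*y)^2 ∧
      C * (x^2+y^2+ε^2)^((p-2)/2) * (x+y)^2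
          ≤ ((x^2+ε^2)^((p-2)/4)*x + (y^2+ε^2)^((p-2)/4)*y)^2 ∧
      ((x^2+ε^2)^((p-2)/4)*x - (y^2+ε^2)^((p-2)/4)*y)^2
          ≤ C' * ((x-y) * ((x^2+ε^2)^((p-2)/2)*x - (y^2+ε^2)^((p-2)/2)*y)) := by
    rcases le_or_gt 2 p with h2 | h2
    · exact scalar_key_ge p hp h2
    · exact scalar_key_lt p hp h2
  obtain ⟨C, C', hC, hC', hkey⟩ := key
  refine ⟨C, C', hC, hC', ?_⟩
  intro x y ε hx hy hε
  rcases le_total y x with h | h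
  · exact hkey x y ε hy h hε
  · obtain ⟨H1, H2, H3⟩ := hkey y x ε hx h hε
    have rK : (y^2+x^2+ε^2:ℝ)^((p-2)/2) = (x^2+y^2+ε^2)^((p-2)/2) := by
      congr 1; ring
    rw [rK] at H1 H2
    exact ⟨by linarith, by linarith, by linarith⟩

set_option maxHeartbeats 1000000 in
theorem stmt6 (p : ℝ) (hp : 1 < p) (d : ℕ) (hd : 1 ≤ d) :
    ∃ C C' : ℝ, 0 < C ∧ 0 < C' ∧
      ∀ (ξ η : EuclideanSpace ℝ (Fin d)) (ε : ℝ), 0 ≤ ε →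
        C * (‖ξ‖ ^ 2 + ‖η‖ ^ 2 + ε ^ 2) ^ ((p - 2) / 2) * ‖ξ - η‖ ^ 2 ≤
          ‖(Real.sqrt (‖ξ‖ ^ 2 + ε ^ 2)) ^ ((p - 2) / 2) • ξ -
            (Real.sqrt (‖η‖ ^ 2 + ε ^ 2)) ^ ((p - 2) / 2) • η‖ ^ 2 ∧
        ‖(Real.sqrt (‖ξ‖ ^ 2 + ε ^ 2)) ^ ((p - 2) / 2) • ξ -
            (Real.sqrt (‖η‖ ^ 2 + ε ^ 2)) ^ ((p - 2) / 2) • η‖ ^ 2 ≤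
          C' * (inner ℝ ((Real.sqrt (‖ξ‖ ^ 2 + ε ^ 2)) ^ (p - 2) • ξ -
            (Real.sqrt (‖η‖ ^ 2 + ε ^ 2)) ^ (p - 2) • η) (ξ - η) : ℝ) := by
  obtain ⟨C, C', hC, hC', hkey⟩ := scalar_key p hp
  refine ⟨C, C', hC, lt_of_lt_of_le one_pos hC', ?_⟩
  intro ξ η ε hε
  obtain ⟨H1, H2, H3⟩ := hkey ‖ξ‖ ‖η‖ ε (norm_nonneg _) (norm_nonneg _) hε
  have hA0 : (0:ℝ) ≤ ‖ξ‖^2 + ε^2 := by positivity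
  have hB0 : (0:ℝ) ≤ ‖η‖^2 + ε^2 := by positivity
  have bS : (Real.sqrt (‖ξ‖^2 + ε^2)) ^ ((p-2)/2) = (‖ξ‖^2+ε^2)^((p-2)/4) := by
    rw [sqrt_rpow_bridge _ hA0]; congr 1; ring
  have bT : (Real.sqrt (‖η‖^2 + ε^2)) ^ ((p-2)/2) = (‖η‖^2+ε^2)^((p-2)/4) := by
    rw [sqrt_rpow_bridge _ hB0]; congr 1; ring
  have bS2 : (Real.sqrt (‖ξ‖^2 + ε^2)) ^ (p-2) = (‖ξ‖^2+ε^2)^((p-2)/2) := by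
    rw [sqrt_rpow_bridge _ hA0]
  have bT2 : (Real.sqrt (‖η‖^2 + ε^2)) ^ (p-2) = (‖η‖^2+ε^2)^((p-2)/2) := by
    rw [sqrt_rpow_bridge _ hB0]
  rw [bS, bT, bS2, bT2]
  set s := (‖ξ‖^2+ε^2)^((p-2)/4) with hs_def
  set t := (‖η‖^2+ε^2)^((p-2)/4) with ht_def
  have hs0 : 0 ≤ s := Real.rpow_nonneg hA0 _
  have ht0 : 0 ≤ t := Real.rpow_nonneg hB0 _
  have hs2 : s^2 = (‖ξ‖^2+ε^2)^((p-2)/2) := by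
    rw [hs_def, rpow_sq' _ hA0]; congr 1; ring
  have ht2 : t^2 = (‖η‖^2+ε^2)^((p-2)/2) := by
    rw [ht_def, rpow_sq' _ hB0]; congr 1; ring
  rw [← hs2, ← ht2] at H3 ⊢
  have hnorm1 : ‖s • ξ - t • η‖^2
      = s^2*‖ξ‖^2 + t^2*‖η‖^2 - 2*(s*t)*(inner ℝ ξ η : ℝ) := by
    rw [norm_sub_sq_real, norm_smul, norm_smul, real_inner_smul_left,
      real_inner_smul_right, Real.norm_eq_abs, Real.norm_eq_abs,
      abs_of_nonneg hs0, abs_of_nonneg ht0]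
    ring
  have hinner : (inner ℝ ((s^2) • ξ - (t^2) • η) (ξ - η) : ℝ)
      = s^2*‖ξ‖^2 + t^2*‖η‖^2 - (s^2+t^2)*(inner ℝ ξ η : ℝ) := by
    rw [inner_sub_left, inner_sub_right, inner_sub_right,
      real_inner_smul_left, real_inner_smul_left, real_inner_smul_left,
      real_inner_smul_left, real_inner_self_eq_norm_sq,
      real_inner_self_eq_norm_sq, real_inner_comm η ξ]
    ring
  have hxy : ‖ξ - η‖^2 = ‖ξ‖^2 + ‖η‖^2 - 2*(inner ℝ ξ η : ℝ) := by
    rw [norm_sub_sq_real]; ring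
  have habs := abs_le.1 (abs_real_inner_le_norm ξ η)
  have hcxy : (inner ℝ ξ η : ℝ) ≤ ‖ξ‖*‖η‖ := habs.2
  have hcyx : -(‖ξ‖*‖η‖) ≤ (inner ℝ ξ η : ℝ) := habs.1
  constructor
  · rw [hxy, hnorm1]
    rcases le_total (C * (‖ξ‖^2+‖η‖^2+ε^2)^((p-2)/2)) (s*t) with h | h
    · have hpr := mul_le_mul_of_nonneg_left hcxy
        (by linarith : (0:ℝ) ≤ s*t - C * (‖ξ‖^2+‖η‖^2+ε^2)^((p-2)/2))
      linarith only [H1, hpr]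
    · have hpr := mul_le_mul_of_nonneg_left hcyx
        (by linarith : (0:ℝ) ≤ C * (‖ξ‖^2+‖η‖^2+ε^2)^((p-2)/2) - s*t)
      linarith only [H2, hpr]
  · rw [hnorm1, hinner]
    have hγ : 0 ≤ C'*(s^2+t^2) - 2*(s*t) := by
      nlinarith [sq_nonneg (s-t), mul_nonneg (sub_nonneg.2 hC')
        (by positivity : (0:ℝ) ≤ s^2+t^2)]
    have hpr := mul_le_mul_of_nonneg_left hcxy hγ
    linarith only [H3, hpr]
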